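/- The parametrization of the class G³ is bijective modulo the stated transformations: for x₁,y₁,x₂,y₂ ∈ ℝ³ with x₁×y₁ ≠ 0 and x₂×y₂ ≠ 0, one has G³(x₁,y₁) = G³(x₂,y₂) (as subgroups of SE(3)) if and only if there exist μ ∈ ℝ and ν ∈ ℝ, ν ≠ 0, such that x₂ = x₁ + μ y₁ and y₂ = ν y₁. -/

import Mathlib

open Matrix

/-- Vectors in ℝ³. -/
abbrev V3 : Type := Fin 3 → ℝ

/-- The two-body phase space M = ℝ³ × ℝ³ × ℝ³ × ℝ³, points (q¹, q², p¹, p²). -/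
abbrev M2B : Type := V3 × V3 × V3 × V3

/-- A 3×3 real matrix is special orthogonal. -/
def SO3 (A : Matrix (Fin 3) (Fin 3) ℝ) : Prop := Aᵀ * A = 1 ∧ A.det = 1

/-- The action of (A, a) ∈ SE(3) on the phase space:
(A,a)·(q¹,q²,p¹,p²) = (Aq¹+a, Aq²+a, Ap¹, Ap²). -/
def act (A : Matrix (Fin 3) (Fin 3) ℝ) (a : V3) (m : M2B) : M2B :=
  (A *ᵥ m.1 + a, A *ᵥ m.2.1 + a, A *ᵥ m.2.2.1, A *ᵥ m.2.2.2)

/-- The isotropy subgroup SE(3)_{(q,p)} of a point of M, as a set of pairs (A,a)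
with A special orthogonal. -/
def isotropy (m : M2B) : Set (Matrix (Fin 3) (Fin 3) ℝ × V3) :=
  {g | SO3 g.1 ∧ act g.1 g.2 m = m}

/-- The momentum map J(q¹,q²,p¹,p²) = (q¹×p¹ + q²×p², p¹+p²). -/
def Jmom (m : M2B) : V3 × V3 :=
  (m.1 ⨯₃ m.2.2.1 + m.2.1 ⨯₃ m.2.2.2, m.2.2.1 + m.2.2.2)

/-- G¹(x) = {(A,a) ∈ SE(3) : a = x − Ax}. -/
def G1 (x : V3) : Set (Matrix (Fin 3) (Fin 3) ℝ × V3) :=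
  {g | SO3 g.1 ∧ g.2 = x - g.1 *ᵥ x}

/-- G²(y) = {(A,0) ∈ SE(3) : Ay = y}. -/
def G2 (y : V3) : Set (Matrix (Fin 3) (Fin 3) ℝ × V3) :=
  {g | SO3 g.1 ∧ g.1 *ᵥ y = y ∧ g.2 = 0}

/-- G³(x,y) = {(A,a) ∈ SE(3) : Ay = y and a = x − Ax}. -/
def G3 (x y : V3) : Set (Matrix (Fin 3) (Fin 3) ℝ × V3) :=
  {g | SO3 g.1 ∧ g.1 *ᵥ y = y ∧ g.2 = x - g.1 *ᵥ x}

/-- G⁴ = {(I, 0)}, the trivial subgroup. -/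
def G4 : Set (Matrix (Fin 3) (Fin 3) ℝ × V3) := {((1 : Matrix (Fin 3) (Fin 3) ℝ), (0 : V3))}


noncomputable def rotPi (y : V3) : Matrix (Fin 3) (Fin 3) ℝ :=
  fun i j => 2 * y i * y j / (y 0 ^ 2 + y 1 ^ 2 + y 2 ^ 2) - if i = j then 1 else 0

lemma fin3mk0 (h : 0 < 3) : (⟨0, h⟩ : Fin 3) = 0 := rfl
lemma fin3mk1 (h : 1 < 3) : (⟨1, h⟩ : Fin 3) = 1 := rfl
lemma fin3mk2 (h : 2 < 3) : (⟨2, h⟩ : Fin 3) = 2 := rfl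

lemma sumsq_ne_zero {y : V3} (hy : y ≠ 0) : y 0 ^ 2 + y 1 ^ 2 + y 2 ^ 2 ≠ 0 := by
  intro h0
  apply hy
  have e0 : y 0 = 0 := by nlinarith [sq_nonneg (y 0), sq_nonneg (y 1), sq_nonneg (y 2)]
  have e1 : y 1 = 0 := by nlinarith [sq_nonneg (y 0), sq_nonneg (y 1), sq_nonneg (y 2)]
  have e2 : y 2 = 0 := by nlinarith [sq_nonneg (y 0), sq_nonneg (y 1), sq_nonneg (y 2)]
  funext i
  fin_cases i <;> simp [fin3mk0, fin3mk1, fin3mk2, e0, e1, e2]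

set_option maxHeartbeats 1000000 in
lemma rotPi_SO3 {y : V3} (hy : y ≠ 0) :
    (rotPi y)ᵀ * rotPi y = 1 ∧ (rotPi y).det = 1 := by
  have hs := sumsq_ne_zero hy
  constructor
  · ext i j
    simp only [Matrix.mul_apply, Fin.sum_univ_three, Matrix.transpose_apply,
      Matrix.one_apply, rotPi]
    fin_cases i <;> fin_cases j <;>
      norm_num [Fin.ext_iff, fin3mk0, fin3mk1, fin3mk2] <;> field_simp <;> ring
  · rw [Matrix.det_fin_three]
    simp only [rotPi]
    norm_num [Fin.ext_iff]
    field_simp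
    ring

lemma rotPi_fix {y : V3} (hy : y ≠ 0) : rotPi y *ᵥ y = y := by
  have hs := sumsq_ne_zero hy
  funext i
  simp only [Matrix.mulVec, dotProduct, Fin.sum_univ_three, rotPi]
  fin_cases i <;> norm_num [Fin.ext_iff, fin3mk0, fin3mk1, fin3mk2] <;> field_simp <;> ring

lemma rotPi_fix_only {y : V3} (hy : y ≠ 0) {v : V3} (hv : rotPi y *ᵥ v = v) :
    v = ((y 0 * v 0 + y 1 * v 1 + y 2 * v 2) / (y 0 ^ 2 + y 1 ^ 2 + y 2 ^ 2)) • y := by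
  have hs := sumsq_ne_zero hy
  have h0 := congrFun hv 0
  have h1 := congrFun hv 1
  have h2 := congrFun hv 2
  simp only [Matrix.mulVec, dotProduct, Fin.sum_univ_three, rotPi] at h0 h1 h2
  norm_num [Fin.ext_iff] at h0 h1 h2
  field_simp at h0 h1 h2
  funext i
  fin_cases i <;>
    simp only [fin3mk0, fin3mk1, fin3mk2, Pi.smul_apply, smul_eq_mul] <;>
    rw [div_mul_eq_mul_div, eq_div_iff hs]
  · linear_combination -h0/2
  · linear_combination -h1/2
  · linear_combination -h2/2

/-- The parametrization of the class G³ is bijective modulo the transformations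
(x₂, y₂) = (x₁ + μ y₁, ν y₁), ν ≠ 0. -/
theorem stmt6 (x1 y1 x2 y2 : V3) (h1 : x1 ⨯₃ y1 ≠ 0) (h2 : x2 ⨯₃ y2 ≠ 0) :
    G3 x1 y1 = G3 x2 y2 ↔
      ∃ μ ν : ℝ, ν ≠ 0 ∧ x2 = x1 + μ • y1 ∧ y2 = ν • y1 := by
  have hy1 : y1 ≠ 0 := fun hy => h1 (by rw [hy]; exact map_zero _)
  have hy2 : y2 ≠ 0 := fun hy => h2 (by rw [hy]; exact map_zero _)
  constructor
  · intro hEq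
    set A := rotPi y1 with hA
    have hmem : (A, x1 - A *ᵥ x1) ∈ G3 x1 y1 :=
      ⟨rotPi_SO3 hy1, rotPi_fix hy1, rfl⟩
    rw [hEq] at hmem
    obtain ⟨-, hAy2, ha⟩ := hmem
    -- y2 = ν • y1
    have hy2eq := rotPi_fix_only hy1 hAy2
    set ν := (y1 0 * y2 0 + y1 1 * y2 1 + y1 2 * y2 2) / (y1 0 ^ 2 + y1 1 ^ 2 + y1 2 ^ 2)
    have hν : ν ≠ 0 := by
      intro h0
      apply hy2
      rw [hy2eq, h0, zero_smul]
    -- x2 - x1 is fixed by A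
    have hfixd : A *ᵥ (x2 - x1) = x2 - x1 := by
      have : x2 - A *ᵥ x2 = x1 - A *ᵥ x1 := by
        rw [← ha]
      rw [Matrix.mulVec_sub]
      have := sub_eq_sub_iff_sub_eq_sub.mp this
      -- this : x2 - x1 = A *ᵥ x2 - A *ᵥ x1
      linear_combination (norm := module) -this
    have hx2eq := rotPi_fix_only hy1 hfixd
    refine ⟨(y1 0 * (x2 - x1) 0 + y1 1 * (x2 - x1) 1 + y1 2 * (x2 - x1) 2) /
        (y1 0 ^ 2 + y1 1 ^ 2 + y1 2 ^ 2), ν, hν, ?_, hy2eq⟩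
    rw [← hx2eq]
    abel
  · rintro ⟨μ, ν, hν, rfl, rfl⟩
    ext g
    constructor
    · rintro ⟨hSO, hgy, hga⟩
      refine ⟨hSO, ?_, ?_⟩
      · rw [Matrix.mulVec_smul, hgy]
      · rw [hga, Matrix.mulVec_add, Matrix.mulVec_smul, hgy]
        abel
    · rintro ⟨hSO, hgy, hga⟩
      have hgy1 : g.1 *ᵥ y1 = y1 := by
        rw [Matrix.mulVec_smul] at hgy
        exact smul_right_injective V3 hν hgy
      refine ⟨hSO, hgy1, ?_⟩
      rw [hga, Matrix.mulVec_add, Matrix.mulVec_smul, hgy1]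
      abel
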